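/- arXiv:1608.07569 — 2 statements merged into one kernel-verified Lean document; each statement's English description precedes it below -/
import Mathlib

section
/- Let d ≥ 1, 1 ≤ k ≤ n, and let φ be a pure state (rank-one projection onto a unit vector) on ℂ^d. Then the universal quantum cloning machine satisfies the fidelity bound F(φ^{⊗n}, C_{k→n}(φ^{⊗k})) ≥ d[k]/d[n]. -/
open scoped BigOperators Matrix Kronecker ComplexOrder
open Matrix

noncomputable section

variable {ι : Type*} [Fintype ι] [DecidableEq ι]

/-- Apply a real-scalar function to a Hermitian matrix via the spectral decomposition
(junk value `0` on non-Hermitian matrices). -/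
def hermFun (f : ℝ → ℂ) (A : Matrix ι ι ℂ) : Matrix ι ι ℂ :=
  if hA : A.IsHermitian then
    (hA.eigenvectorUnitary : Matrix ι ι ℂ) * Matrix.diagonal (fun i => f (hA.eigenvalues i)) *
      (star (hA.eigenvectorUnitary : Matrix ι ι ℂ))
  else 0

/-- Matrix logarithm (on the support; natural logarithm). -/
def matLog (A : Matrix ι ι ℂ) : Matrix ι ι ℂ := hermFun (fun x => (Real.log x : ℂ)) A

/-- Matrix square root of a Hermitian (e.g. positive semidefinite) matrix. -/
def matSqrt (A : Matrix ι ι ℂ) : Matrix ι ι ℂ := hermFun (fun x => (Real.sqrt x : ℂ)) A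

/-- Complex matrix power with the Moore–Penrose convention (inverse powers taken on the support). -/
def matCPow (A : Matrix ι ι ℂ) (z : ℂ) : Matrix ι ι ℂ :=
  hermFun (fun x => if x = 0 then 0 else (x : ℂ) ^ z) A

/-- A state (density operator). -/
def IsState (ρ : Matrix ι ι ℂ) : Prop := ρ.PosSemidef ∧ ρ.trace = 1

/-- Quantum relative entropy `D(ρ‖σ) = tr[ρ (log ρ - log σ)]`. -/
def relEnt (ρ σ : Matrix ι ι ℂ) : ℝ := ((ρ * (matLog ρ - matLog σ)).trace).re

/-- von Neumann entropy `H(ρ) = -tr[ρ log ρ]`. -/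
def vnEntropy (ρ : Matrix ι ι ℂ) : ℝ := -((ρ * matLog ρ).trace).re

/-- Trace norm `‖X‖₁ = tr √(X† X)`. -/
def traceNorm (X : Matrix ι ι ℂ) : ℝ := ((matSqrt (Xᴴ * X)).trace).re

/-- Fidelity `F(ρ,σ) = ‖√ρ √σ‖₁²`. -/
def fidelity (ρ σ : Matrix ι ι ℂ) : ℝ := (traceNorm (matSqrt ρ * matSqrt σ)) ^ 2

variable {A B : Type*} [Fintype A] [DecidableEq A] [Fintype B] [DecidableEq B]

/-- The extension `Λ ⊗ id_m` of a map on matrices. -/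
def extendChan (Λ : Matrix A A ℂ →ₗ[ℂ] Matrix B B ℂ) {m : Type*} [Fintype m]
    (M : Matrix (A × m) (A × m) ℂ) : Matrix (B × m) (B × m) ℂ :=
  fun p q => Λ (fun a a' => M (a, p.2) (a', q.2)) p.1 q.1

/-- A quantum channel: a completely positive trace-preserving linear map. -/
structure IsQChannel (Λ : Matrix A A ℂ →ₗ[ℂ] Matrix B B ℂ) : Prop where
  tp : ∀ M, (Λ M).trace = M.trace
  cp : ∀ (m : ℕ) (M : Matrix (A × Fin m) (A × Fin m) ℂ), M.PosSemidef →
    (extendChan Λ M).PosSemidef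

/-- The marginal of a state of `n` systems on the `j`-th system. -/
def marginal {n : ℕ} (ρ : Matrix (Fin n → ι) (Fin n → ι) ℂ) (j : Fin n) :
    Matrix ι ι ℂ :=
  fun a b => ∑ f : {i : Fin n // i ≠ j} → ι,
      ρ (fun i => if h : i = j then a else f ⟨i, h⟩)
        (fun i => if h : i = j then b else f ⟨i, h⟩)

/-- `n`-fold tensor power of a matrix. -/
def tpow (σ : Matrix ι ι ℂ) (n : ℕ) : Matrix (Fin n → ι) (Fin n → ι) ℂ :=
  fun f g => ∏ i, σ (f i) (g i)

/-- Partial trace over the last `n - k` tensor factors. -/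
def ptraceLast {n k : ℕ} (h : k ≤ n) (ρ : Matrix (Fin n → ι) (Fin n → ι) ℂ) :
    Matrix (Fin k → ι) (Fin k → ι) ℂ :=
  fun a b => ∑ z : Fin (n - k) → ι,
    ρ (fun i => if h' : (i : ℕ) < k then a ⟨i, h'⟩ else z ⟨(i : ℕ) - k, by have := i.isLt; omega⟩)
      (fun i => if h' : (i : ℕ) < k then b ⟨i, h'⟩ else z ⟨(i : ℕ) - k, by have := i.isLt; omega⟩)

/-- Permutation matrix acting on `(ℂ^d)^{⊗ n}`. -/
def permMat (d n : ℕ) (π : Equiv.Perm (Fin n)) :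
    Matrix (Fin n → Fin d) (Fin n → Fin d) ℂ :=
  fun f g => if g = f ∘ π then 1 else 0

/-- Orthogonal projection onto the symmetric subspace of `(ℂ^d)^{⊗ n}`. -/
def symProj (d n : ℕ) : Matrix (Fin n → Fin d) (Fin n → Fin d) ℂ :=
  ((n.factorial : ℂ))⁻¹ • ∑ π : Equiv.Perm (Fin n), permMat d n π

/-- Dimension `d[n] = C(d+n-1, n)` of the symmetric subspace. -/
def dsym (d n : ℕ) : ℕ := (d + n - 1).choose n

/-- Maximally mixed state on the symmetric subspace. -/
def piSym (d n : ℕ) : Matrix (Fin n → Fin d) (Fin n → Fin d) ℂ :=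
  ((dsym d n : ℂ))⁻¹ • symProj d n

/-- Tensoring a matrix on the first `k` factors with the identity on the last `n-k` factors. -/
def extendId {d k n : ℕ} (h : k ≤ n) (M : Matrix (Fin k → Fin d) (Fin k → Fin d) ℂ) :
    Matrix (Fin n → Fin d) (Fin n → Fin d) ℂ :=
  fun f g => (if ∀ i : Fin n, k ≤ (i : ℕ) → f i = g i then 1 else 0) *
    M (fun i => f (Fin.castLE h i)) (fun i => g (Fin.castLE h i))

/-- The universal quantum cloning machine `C_{k→n}`. -/
def uqcm (d : ℕ) {k n : ℕ} (h : k ≤ n) (ω : Matrix (Fin k → Fin d) (Fin k → Fin d) ℂ) :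
    Matrix (Fin n → Fin d) (Fin n → Fin d) ℂ :=
  (((dsym d k : ℂ)) / ((dsym d n : ℂ))) •
    (symProj d n * extendId h (symProj d k * ω * symProj d k) * symProj d n)

/-- The symmetrized partial trace channel `P_{n→k}`. -/
def symPTrace (d : ℕ) {k n : ℕ} (h : k ≤ n) (ω : Matrix (Fin n → Fin d) (Fin n → Fin d) ℂ) :
    Matrix (Fin k → Fin d) (Fin k → Fin d) ℂ :=
  symProj d k * ptraceLast h (symProj d n * ω * symProj d n) * symProj d k

/-- Orthogonal projection onto the antisymmetric subspace of `(ℂ^d)^{⊗ n}`. -/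
def antiProj (d n : ℕ) : Matrix (Fin n → Fin d) (Fin n → Fin d) ℂ :=
  ((n.factorial : ℂ))⁻¹ • ∑ π : Equiv.Perm (Fin n), ((Equiv.Perm.sign π : ℤ) : ℂ) • permMat d n π

/-- Maximally mixed state on the antisymmetric subspace. -/
def piAnti (d n : ℕ) : Matrix (Fin n → Fin d) (Fin n → Fin d) ℂ :=
  ((d.choose n : ℂ))⁻¹ • antiProj d n

/-- The antisymmetric cloning machine. -/
def antiClone (d : ℕ) {k n : ℕ} (h : k ≤ n) (ω : Matrix (Fin k → Fin d) (Fin k → Fin d) ℂ) :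
    Matrix (Fin n → Fin d) (Fin n → Fin d) ℂ :=
  (((d.choose k : ℂ)) / ((d.choose n : ℂ))) •
    (antiProj d n * extendId h (antiProj d k * ω * antiProj d k) * antiProj d n)

/-- The antisymmetrized partial trace. -/
def antiPTrace (d : ℕ) {k n : ℕ} (h : k ≤ n) (ω : Matrix (Fin n → Fin d) (Fin n → Fin d) ℂ) :
    Matrix (Fin k → Fin d) (Fin k → Fin d) ℂ :=
  antiProj d k * ptraceLast h (antiProj d n * ω * antiProj d n) * antiProj d k

/-- Rank-one projection (outer product) `|v⟩⟨v|`. -/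
def outer {α : Type*} (v : α → ℂ) : Matrix α α ℂ :=
  fun x y => v x * (starRingEnd ℂ) (v y)

/-- Slater determinant vector `φ₁ ∧ ⋯ ∧ φ_k`. -/
def slater {d k : ℕ} (w : Fin k → (Fin d → ℂ)) : (Fin k → Fin d) → ℂ :=
  fun f => ((Real.sqrt k.factorial : ℂ))⁻¹ *
    ∑ π : Equiv.Perm (Fin k), ((Equiv.Perm.sign π : ℤ) : ℂ) * ∏ i, w (π i) (f i)

/-- Partial trace over the second tensor factor. -/
def trB {ιA ιB : Type*} [Fintype ιB] (ρ : Matrix (ιA × ιB) (ιA × ιB) ℂ) : Matrix ιA ιA ℂ :=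
  fun a a' => ∑ b, ρ (a, b) (a', b)

/-- Partial trace over the first tensor factor. -/
def trA {ιA ιB : Type*} [Fintype ιA] (ρ : Matrix (ιA × ιB) (ιA × ιB) ℂ) : Matrix ιB ιB ℂ :=
  fun b b' => ∑ a, ρ (a, b) (a, b')

/-- The probability density `β(t) = (π/2)(1 + cosh(π t))⁻¹`. -/
def betaDens (t : ℝ) : ℝ := (Real.pi / 2) * (1 + Real.cosh (Real.pi * t))⁻¹

/-- Rotated Petz recovery map `R^t_{A,X}`, mapping operators on `B` to operators on `A ⊗ B`. -/
def petzA {ιA ιB : Type*} [Fintype ιA] [DecidableEq ιA] [Fintype ιB] [DecidableEq ιB]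
    (t : ℝ) (X : Matrix (ιA × ιB) (ιA × ιB) ℂ) (Y : Matrix ιB ιB ℂ) :
    Matrix (ιA × ιB) (ιA × ιB) ℂ :=
  matCPow X ((1 + t * Complex.I) / 2) *
    ((1 : Matrix ιA ιA ℂ) ⊗ₖ
      (matCPow (trA X) (-(1 + t * Complex.I) / 2) * Y * matCPow (trA X) (-(1 - t * Complex.I) / 2))) *
    matCPow X ((1 - t * Complex.I) / 2)

/-- Rotated Petz recovery map `R^t_{B,X}`, mapping operators on `A` to operators on `A ⊗ B`. -/
def petzB {ιA ιB : Type*} [Fintype ιA] [DecidableEq ιA] [Fintype ιB] [DecidableEq ιB]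
    (t : ℝ) (X : Matrix (ιA × ιB) (ιA × ιB) ℂ) (Y : Matrix ιA ιA ℂ) :
    Matrix (ιA × ιB) (ιA × ιB) ℂ :=
  matCPow X ((1 + t * Complex.I) / 2) *
    ((matCPow (trB X) (-(1 + t * Complex.I) / 2) * Y * matCPow (trB X) (-(1 - t * Complex.I) / 2)) ⊗ₖ
      (1 : Matrix ιB ιB ℂ)) *
    matCPow X ((1 - t * Complex.I) / 2)

/-- Cloning map between two general subspaces, given by their orthogonal projections. -/
def genClone {d k n : ℕ} (h : k ≤ n) (dX dY : ℕ)
    (PX : Matrix (Fin n → Fin d) (Fin n → Fin d) ℂ)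
    (PY : Matrix (Fin k → Fin d) (Fin k → Fin d) ℂ)
    (ω : Matrix (Fin k → Fin d) (Fin k → Fin d) ℂ) :
    Matrix (Fin n → Fin d) (Fin n → Fin d) ℂ :=
  (((dY : ℂ)) / ((dX : ℂ))) • (PX * extendId h (PY * ω * PY) * PX)

/-- Partial trace channel between two general subspaces. -/
def genPTrace {d k n : ℕ} (h : k ≤ n)
    (PX : Matrix (Fin n → Fin d) (Fin n → Fin d) ℂ)
    (PY : Matrix (Fin k → Fin d) (Fin k → Fin d) ℂ)
    (ω : Matrix (Fin n → Fin d) (Fin n → Fin d) ℂ) :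
    Matrix (Fin k → Fin d) (Fin k → Fin d) ℂ :=
  PY * ptraceLast h (PX * ω * PX) * PY

end

noncomputable section AuxUQCM
set_option linter.unusedSectionVars false
variable {ι : Type*} [Fintype ι] [DecidableEq ι]

lemma eig_sq {A : Matrix ι ι ℂ} (hA : A.IsHermitian) {c : ℝ} (h : A * A = (c:ℂ) • A) :
    ∀ i, hA.eigenvalues i ^ 2 = c * hA.eigenvalues i := by
  intro i
  set U : Matrix ι ι ℂ := (hA.eigenvectorUnitary : Matrix ι ι ℂ) with hUdef
  have hU : U * star U = 1 := by
    exact (Matrix.mem_unitaryGroup_iff).mp hA.eigenvectorUnitary.2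
  have hdiag : star U * A * U = diagonal (RCLike.ofReal ∘ hA.eigenvalues) := by
    simpa using hA.conjStarAlgAut_star_eigenvectorUnitary
  have key : (diagonal (RCLike.ofReal ∘ hA.eigenvalues) : Matrix ι ι ℂ) * diagonal (RCLike.ofReal ∘ hA.eigenvalues)
      = (c:ℂ) • diagonal (RCLike.ofReal ∘ hA.eigenvalues) := by
    rw [← hdiag]
    calc (star U * A * U) * (star U * A * U) = star U * (A * (U * star U) * A) * U := by
          noncomm_ring
    _ = star U * (A * A) * U := by rw [hU]; noncomm_ring
    _ = star U * ((c:ℂ) • A) * U := by rw [h]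
    _ = (c:ℂ) • (star U * A * U) := by rw [mul_smul_comm, smul_mul_assoc]
  rw [diagonal_mul_diagonal] at key
  have h4 := congrFun (congrFun key i) i
  simp only [diagonal_apply_eq, Matrix.smul_apply, Pi.mul_apply, Function.comp_apply,
    smul_eq_mul] at h4
  rw [show (RCLike.ofReal : ℝ → ℂ) = Complex.ofReal from rfl] at h4
  rw [sq]
  exact_mod_cast h4

lemma hermFun_eq_smul {A : Matrix ι ι ℂ} (hA : A.IsHermitian) {f : ℝ → ℂ} {r : ℝ}
    (hf : ∀ i, f (hA.eigenvalues i) = (r : ℂ) * (hA.eigenvalues i : ℂ)) :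
    hermFun f A = (r : ℂ) • A := by
  rw [hermFun, dif_pos hA]
  have hD : (diagonal (fun i => f (hA.eigenvalues i)) : Matrix ι ι ℂ)
      = (r:ℂ) • diagonal (RCLike.ofReal ∘ hA.eigenvalues) := by
    rw [← diagonal_smul]
    refine congrArg diagonal (funext fun i => ?_)
    simpa using hf i
  rw [hD, mul_smul_comm, smul_mul_assoc]
  congr 1
  exact hA.spectral_theorem.symm

lemma hermFun_isHermitian {A : Matrix ι ι ℂ} (hA : A.IsHermitian) {g : ℝ → ℝ} :
    (hermFun (fun x => ((g x : ℝ) : ℂ)) A).IsHermitian := by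
  rw [hermFun, dif_pos hA]
  have hd : (diagonal (fun i => ((g (hA.eigenvalues i) : ℝ) : ℂ)) : Matrix ι ι ℂ)ᴴ
      = diagonal (fun i => ((g (hA.eigenvalues i) : ℝ) : ℂ)) := by
    rw [diagonal_conjTranspose]
    refine congrArg diagonal (funext fun i => ?_)
    simp [Complex.conj_ofReal]
  simp [Matrix.IsHermitian, conjTranspose_mul, hd, Matrix.star_eq_conjTranspose, mul_assoc]

lemma hermFun_mulVec {A : Matrix ι ι ℂ} (hA : A.IsHermitian) {f : ℝ → ℂ} {μ : ℝ}
    {v : ι → ℂ} (hv : A *ᵥ v = (μ : ℂ) • v) :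
    hermFun f A *ᵥ v = f μ • v := by
  set U : Matrix ι ι ℂ := (hA.eigenvectorUnitary : Matrix ι ι ℂ) with hUdef
  have hU1 : star U * U = 1 := (Matrix.mem_unitaryGroup_iff').mp hA.eigenvectorUnitary.2
  have hU2 : U * star U = 1 := (Matrix.mem_unitaryGroup_iff).mp hA.eigenvectorUnitary.2
  set y : ι → ℂ := star U *ᵥ v with hy
  have hDy : diagonal (RCLike.ofReal ∘ hA.eigenvalues) *ᵥ y = (μ:ℂ) • y := by
    have e : (diagonal (RCLike.ofReal ∘ hA.eigenvalues) : Matrix ι ι ℂ) = star U * A * U :=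
      by simpa using (hA.conjStarAlgAut_star_eigenvectorUnitary).symm
    calc diagonal (RCLike.ofReal ∘ hA.eigenvalues) *ᵥ y
        = (star U * A * U * star U) *ᵥ v := by rw [e, hy, mulVec_mulVec]
      _ = (star U * A) *ᵥ v := by rw [mul_assoc, hU2, mul_one]
      _ = star U *ᵥ (A *ᵥ v) := by rw [← mulVec_mulVec]
      _ = (μ:ℂ) • y := by rw [hv, mulVec_smul, hy]
  have hDfy : (diagonal (fun i => f (hA.eigenvalues i)) : Matrix ι ι ℂ) *ᵥ y = f μ • y := by
    funext i
    have h1 := congrFun hDy i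
    simp only [mulVec_diagonal, Function.comp_apply, Pi.smul_apply, smul_eq_mul] at h1 ⊢
    by_cases hyi : y i = 0
    · simp [hyi]
    · have : (hA.eigenvalues i : ℂ) = (μ : ℂ) := mul_right_cancel₀ hyi h1
      rw [show hA.eigenvalues i = μ from by exact_mod_cast this]
  rw [hermFun, dif_pos hA]
  calc (U * diagonal (fun i => f (hA.eigenvalues i)) * star U) *ᵥ v
      = U *ᵥ ((diagonal (fun i => f (hA.eigenvalues i)) : Matrix ι ι ℂ) *ᵥ (star U *ᵥ v)) := by
        rw [mulVec_mulVec, mulVec_mulVec]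
    _ = U *ᵥ (f μ • y) := by rw [← hy, hDfy]
    _ = f μ • (U *ᵥ (star U *ᵥ v)) := by rw [mulVec_smul, hy]
    _ = f μ • v := by rw [mulVec_mulVec, hU2, one_mulVec]

----------------------------------------------------------------
-- concrete defs (copied from problem file)

----------------------------------------------------------------
-- outer lemmas

lemma outer_conjTranspose {v : ι → ℂ} : (outer v)ᴴ = outer v := by
  funext x y
  simp [outer, conjTranspose_apply, mul_comm]

lemma outer_isHermitian {v : ι → ℂ} : (outer v).IsHermitian := outer_conjTranspose

lemma outer_mul_outer {v : ι → ℂ} (hv : ∑ z, (starRingEnd ℂ) (v z) * v z = 1) :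
    outer v * outer v = outer v := by
  funext x y
  simp only [Matrix.mul_apply, outer]
  calc ∑ z, v x * (starRingEnd ℂ) (v z) * (v z * (starRingEnd ℂ) (v y))
      = (v x * (starRingEnd ℂ) (v y)) * ∑ z, (starRingEnd ℂ) (v z) * v z := by
        rw [Finset.mul_sum]; exact Finset.sum_congr rfl fun z _ => by ring
    _ = v x * (starRingEnd ℂ) (v y) := by rw [hv, mul_one]

lemma herm_mul_outer_mul_herm {S : Matrix ι ι ℂ} (hS : Sᴴ = S) (v : ι → ℂ) :
    S * outer v * S = outer (S *ᵥ v) := by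
  funext x y
  simp only [Matrix.mul_apply, outer, mulVec, dotProduct]
  have hc : (starRingEnd ℂ) (∑ b, S y b * v b) = ∑ b, (starRingEnd ℂ) (v b) * S b y := by
    rw [map_sum]
    refine Finset.sum_congr rfl fun b _ => ?_
    have hb : S b y = (starRingEnd ℂ) (S y b) := by
      conv_lhs => rw [← hS]
      simp [conjTranspose_apply]
    rw [hb, _root_.map_mul]; ring
  trans ∑ a, ∑ b, (S x a * v a) * ((starRingEnd ℂ) (v b) * S b y)
  · rw [Finset.sum_comm]
    refine Finset.sum_congr rfl fun b _ => ?_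
    rw [Finset.sum_mul]
    exact Finset.sum_congr rfl fun a _ => by ring
  · rw [← Finset.sum_mul_sum, ← hc]

lemma outer_smul_real (r : ℝ) (v : ι → ℂ) :
    outer (((r:ℂ)) • v) = (((r^2 : ℝ) : ℂ)) • outer v := by
  funext x y
  simp only [outer, Pi.smul_apply, smul_eq_mul, _root_.map_mul, Matrix.smul_apply,
    Complex.conj_ofReal]
  push_cast
  ring

lemma trace_outer {v : ι → ℂ} (hv : ∑ z, (starRingEnd ℂ) (v z) * v z = 1) :
    (outer v).trace = 1 := by
  rw [Matrix.trace, ← hv]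
  exact Finset.sum_congr rfl fun z _ => by simp [Matrix.diag, outer, mul_comm]

----------------------------------------------------------------
-- symmetric projector facts

def vtens {d : ℕ} (u : Fin d → ℂ) (m : ℕ) : (Fin m → Fin d) → ℂ := fun f => ∏ i, u (f i)

lemma tpow_outer {d m : ℕ} (u : Fin d → ℂ) :
    tpow (outer u) m = outer (vtens u m) := by
  funext f g
  simp only [tpow, outer, vtens]
  rw [Finset.prod_mul_distrib, map_prod]

lemma vtens_norm {d m : ℕ} {u : Fin d → ℂ} (hc : ∑ a, (starRingEnd ℂ) (u a) * u a = 1) :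
    ∑ f : Fin m → Fin d, (starRingEnd ℂ) (vtens u m f) * vtens u m f = 1 := by
  have : ∀ f : Fin m → Fin d, (starRingEnd ℂ) (vtens u m f) * vtens u m f
      = ∏ i, ((starRingEnd ℂ) (u (f i)) * u (f i)) := by
    intro f
    simp only [vtens]
    rw [map_prod, ← Finset.prod_mul_distrib]
  rw [Finset.sum_congr rfl fun f _ => this f]
  calc ∑ f : Fin m → Fin d, ∏ i : Fin m, ((starRingEnd ℂ) (u (f i)) * u (f i))
      = ∏ _i : Fin m, ∑ a, ((starRingEnd ℂ) (u a) * u a) :=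
        (Fintype.prod_sum (fun (_i : Fin m) (a : Fin d) => (starRingEnd ℂ) (u a) * u a)).symm
    _ = 1 := by rw [hc]; simp

lemma permMat_comp_prod {d m : ℕ} (u : Fin d → ℂ) (π : Equiv.Perm (Fin m))
    (f : Fin m → Fin d) : vtens u m (f ∘ π) = vtens u m f := by
  simp only [vtens, Function.comp]
  exact Equiv.prod_comp π (fun i => u (f i))

lemma symProj_mulVec_vtens {d m : ℕ} (u : Fin d → ℂ) :
    symProj d m *ᵥ vtens u m = vtens u m := by
  funext f
  simp only [mulVec, dotProduct, symProj, Matrix.smul_apply, Matrix.sum_apply, permMat,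
    smul_eq_mul]
  have h1 : ∀ g : Fin m → Fin d,
      ((m.factorial : ℂ))⁻¹ * (∑ π : Equiv.Perm (Fin m), if g = f ∘ π then (1:ℂ) else 0) *
        vtens u m g
      = ((m.factorial : ℂ))⁻¹ * ∑ π : Equiv.Perm (Fin m),
          (if g = f ∘ π then vtens u m g else 0) := by
    intro g
    rw [mul_assoc, Finset.sum_mul]
    congr 1
    exact Finset.sum_congr rfl fun π _ => by rw [ite_mul, one_mul, zero_mul]
  rw [Finset.sum_congr rfl fun g _ => h1 g, ← Finset.mul_sum, Finset.sum_comm]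
  have h2 : ∀ π : Equiv.Perm (Fin m),
      (∑ g : Fin m → Fin d, if g = f ∘ π then vtens u m g else 0) = vtens u m f := by
    intro π
    rw [Finset.sum_ite_eq' Finset.univ (f ∘ π) (vtens u m)]
    simp [permMat_comp_prod]
  rw [Finset.sum_congr rfl fun π _ => h2 π, Finset.sum_const, Finset.card_univ,
    Fintype.card_perm, Fintype.card_fin, nsmul_eq_mul, ← mul_assoc, inv_mul_cancel₀, one_mul]
  exact_mod_cast Nat.factorial_ne_zero m

lemma permMat_conjTranspose {d m : ℕ} (π : Equiv.Perm (Fin m)) :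
    (permMat d m π)ᴴ = permMat d m π⁻¹ := by
  funext f g
  simp only [conjTranspose_apply, permMat]
  have : (f = g ∘ π) ↔ (g = f ∘ ⇑π⁻¹) := by
    constructor
    · intro h; subst h; funext x; simp
    · intro h; subst h; funext x; simp
  rw [apply_ite (star : ℂ → ℂ), star_one, star_zero, if_congr this rfl rfl]

lemma symProj_conjTranspose {d m : ℕ} : (symProj d m)ᴴ = symProj d m := by
  simp only [symProj, conjTranspose_smul, conjTranspose_sum, permMat_conjTranspose]
  congr 1
  · simp
  · exact Fintype.sum_equiv (Equiv.inv (Equiv.Perm (Fin m))) _ _ fun π => rfl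

----------------------------------------------------------------
-- splitting Fin n → Fin d


def glue {d k n : ℕ} (hkn : k ≤ n) (a : Fin k → Fin d) (t : Fin (n - k) → Fin d) : Fin n → Fin d :=
  fun i => if h : (i : ℕ) < k then a ⟨i, h⟩ else t ⟨(i : ℕ) - k, by have := i.isLt; omega⟩

def headF {d k n : ℕ} (hkn : k ≤ n) (f : Fin n → Fin d) : Fin k → Fin d := fun i => f (Fin.castLE hkn i)

def tailF {d k n : ℕ} (hkn : k ≤ n) (f : Fin n → Fin d) : Fin (n - k) → Fin d :=
  fun j => f ⟨k + (j : ℕ), by have := j.isLt; omega⟩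

lemma glue_head_tail {d k n : ℕ} (hkn : k ≤ n) (f : Fin n → Fin d) : glue hkn (headF hkn f) (tailF hkn f) = f := by
  funext i
  by_cases h : (i : ℕ) < k
  · simp only [glue, dif_pos h, headF]
    exact congrArg _ (Fin.ext (by simp))
  · simp only [glue, dif_neg h, tailF]
    exact congrArg _ (Fin.ext (by simp; omega))

lemma head_glue {d k n : ℕ} (hkn : k ≤ n) (a : Fin k → Fin d) (t : Fin (n - k) → Fin d) :
    headF hkn (glue hkn a t) = a := by
  funext i
  have h : ((Fin.castLE hkn i : Fin n) : ℕ) < k := by simp [i.isLt]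
  simp only [headF, glue, dif_pos h]
  exact congrArg _ (Fin.ext (by simp))

lemma tail_glue {d k n : ℕ} (hkn : k ≤ n) (a : Fin k → Fin d) (t : Fin (n - k) → Fin d) :
    tailF hkn (glue hkn a t) = t := by
  funext j
  have h : ¬ ((⟨k + (j : ℕ), by have := j.isLt; omega⟩ : Fin n) : ℕ) < k := by simp
  simp only [tailF, glue, dif_neg h]
  exact congrArg _ (Fin.ext (by simp))

def splitEquiv {d k n : ℕ} (hkn : k ≤ n) : ((Fin k → Fin d) × (Fin (n - k) → Fin d)) ≃ (Fin n → Fin d) where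
  toFun p := glue hkn p.1 p.2
  invFun f := (headF hkn f, tailF hkn f)
  left_inv p := by simp [head_glue hkn, tail_glue hkn]
  right_inv f := glue_head_tail hkn f

lemma vtens_glue {d k n : ℕ} (hkn : k ≤ n) (u : Fin d → ℂ) (a : Fin k → Fin d) (t : Fin (n - k) → Fin d) :
    vtens u n (glue hkn a t) = vtens u k a * vtens u (n - k) t := by
  simp only [vtens]
  have hnk : k + (n - k) = n := by omega
  rw [← Fin.prod_congr' (fun i : Fin n => u (glue hkn a t i)) hnk, Fin.prod_univ_add]
  congr 1
  · refine Finset.prod_congr rfl fun i _ => ?_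
    have h : ((Fin.cast hnk (Fin.castAdd (n - k) i) : Fin n) : ℕ) < k := by simp [i.isLt]
    simp only [glue, dif_pos h]
    exact congrArg _ (Fin.ext (by simp))
  · refine Finset.prod_congr rfl fun j _ => ?_
    have h : ¬ ((Fin.cast hnk (Fin.natAdd k j) : Fin n) : ℕ) < k := by simp
    simp only [glue, dif_neg h]
    exact congrArg _ (Fin.ext (by simp))

lemma cond_iff {d k n : ℕ} (hkn : k ≤ n) (f : Fin n → Fin d) (b : Fin k → Fin d)
    (t : Fin (n - k) → Fin d) :
    (∀ i : Fin n, k ≤ (i : ℕ) → f i = glue hkn b t i) ↔ t = tailF hkn f := by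
  constructor
  · intro h
    funext j
    have h2 := h ⟨k + (j : ℕ), by have := j.isLt; omega⟩ (by simp)
    have h3 : glue hkn b t ⟨k + (j : ℕ), by have := j.isLt; omega⟩ = t j := by
      simp only [glue]
      rw [dif_neg (by simp)]
      exact congrArg _ (Fin.ext (by simp))
    rw [show tailF hkn f j = f ⟨k + (j : ℕ), by have := j.isLt; omega⟩ from rfl, h2, h3]
  · intro h i hi
    subst h
    have h4 : glue hkn b (tailF hkn f) i
        = f ⟨k + ((i : ℕ) - k), by have := i.isLt; omega⟩ := by
      simp only [glue]
      rw [dif_neg (not_lt.mpr hi)]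
      rfl
    rw [h4]
    exact congrArg f (Fin.ext (by simp; omega))

lemma extendId_outer_mulVec {d k n : ℕ} (hkn : k ≤ n) (u : Fin d → ℂ)
    (hck : ∑ b : Fin k → Fin d, (starRingEnd ℂ) (vtens u k b) * vtens u k b = 1) :
    extendId hkn (outer (vtens u k)) *ᵥ vtens u n = vtens u n := by
  funext f
  have hb : ∀ (b : Fin k → Fin d) (t : Fin (n - k) → Fin d),
      (fun i : Fin k => glue hkn b t (Fin.castLE hkn i)) = b :=
    fun b t => head_glue hkn b t
  have hsum : (extendId hkn (outer (vtens u k)) *ᵥ vtens u n) f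
      = ∑ g : Fin n → Fin d, extendId hkn (outer (vtens u k)) f g * vtens u n g := rfl
  rw [hsum,
    ← Equiv.sum_comp (splitEquiv (d := d) hkn)
      (fun g => extendId hkn (outer (vtens u k)) f g * vtens u n g),
    Fintype.sum_prod_type]
  simp only [splitEquiv, Equiv.coe_fn_mk]
  have step : ∀ b : Fin k → Fin d,
      (∑ t : Fin (n - k) → Fin d,
        extendId hkn (outer (vtens u k)) f (glue hkn b t) * vtens u n (glue hkn b t))
      = ((vtens u k fun i => f (Fin.castLE hkn i)) * vtens u (n - k) (tailF hkn f)) *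
          ((starRingEnd ℂ) (vtens u k b) * vtens u k b) := by
    intro b
    have h1 : ∀ t : Fin (n - k) → Fin d,
        extendId hkn (outer (vtens u k)) f (glue hkn b t) * vtens u n (glue hkn b t)
        = if t = tailF hkn f then
            ((vtens u k fun i => f (Fin.castLE hkn i)) * vtens u (n - k) t) *
              ((starRingEnd ℂ) (vtens u k b) * vtens u k b)
          else 0 := by
      intro t
      by_cases ht : t = tailF hkn f
      · rw [if_pos ht, extendId, if_pos ((cond_iff hkn f b t).mpr ht), one_mul,
          vtens_glue hkn u b t, hb b t]
        simp only [outer]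
        ring
      · rw [if_neg ht, extendId, if_neg (fun hcond => ht ((cond_iff hkn f b t).mp hcond)),
          zero_mul, zero_mul]
    rw [Finset.sum_congr rfl fun t _ => h1 t,
      Finset.sum_ite_eq' Finset.univ (tailF hkn f)]
    simp
  rw [Finset.sum_congr rfl fun b _ => step b, ← Finset.mul_sum, hck, mul_one,
    ← vtens_glue hkn u]
  exact congrArg (vtens u n) (glue_head_tail hkn f)

lemma extendId_conjTranspose {d k n : ℕ} (hkn : k ≤ n)
    {M : Matrix (Fin k → Fin d) (Fin k → Fin d) ℂ} (hM : Mᴴ = M) :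
    (extendId hkn M)ᴴ = extendId hkn M := by
  funext f g
  simp only [conjTranspose_apply, extendId]
  have hM' : ∀ x y, star (M y x) = M x y := by
    intro x y
    have := congrFun (congrFun hM x) y
    rw [← this]
    rfl
  rw [star_mul', apply_ite (star : ℂ → ℂ), star_one, star_zero, hM',
    if_congr (forall_congr' fun i => imp_congr Iff.rfl eq_comm) rfl rfl]


end AuxUQCM

/-- **Werner's fidelity bound for the UQCM:**
`F(φ^{⊗n}, C_{k→n}(φ^{⊗k})) ≥ d[k]/d[n]` for every pure state `φ`. -/
theorem uqcm_fidelity_bound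
    (d k n : ℕ) (hd : 1 ≤ d) (hk : 1 ≤ k) (hkn : k ≤ n)
    (u : Fin d → ℂ) (hu : ∑ a, Complex.normSq (u a) = 1) :
    fidelity (tpow (outer u) n) (uqcm d hkn (tpow (outer u) k)) ≥
      (dsym d k : ℝ) / (dsym d n : ℝ) := by
  have hc : ∑ a, (starRingEnd ℂ) (u a) * u a = 1 := by
    calc ∑ a, (starRingEnd ℂ) (u a) * u a = ∑ a, ((Complex.normSq (u a) : ℝ) : ℂ) :=
          Finset.sum_congr rfl fun a _ => (Complex.normSq_eq_conj_mul_self).symm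
      _ = 1 := by rw [← Complex.ofReal_sum, hu, Complex.ofReal_one]
  set vk := vtens u k with hvkdef
  set vn := vtens u n with hvndef
  have hvk : ∑ b, (starRingEnd ℂ) (vk b) * vk b = 1 := vtens_norm hc
  have hvn : ∑ g, (starRingEnd ℂ) (vn g) * vn g = 1 := vtens_norm hc
  set μ : ℝ := (dsym d k : ℝ) / (dsym d n : ℝ) with hμ
  have hdk : 0 < (dsym d k : ℝ) := by
    have : 0 < dsym d k := Nat.choose_pos (by unfold dsym at *; omega)
    exact_mod_cast this
  have hdn : 0 < (dsym d n : ℝ) := by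
    have : 0 < dsym d n := Nat.choose_pos (by unfold dsym at *; omega)
    exact_mod_cast this
  have hμpos : 0 < μ := div_pos hdk hdn
  set σ := uqcm d hkn (tpow (outer u) k) with hσdef
  have hσ1 : σ = ((μ : ℝ) : ℂ) • (symProj d n * extendId hkn (outer vk) * symProj d n) := by
    rw [hσdef, uqcm, tpow_outer]
    congr 2
    · rw [hμ]; push_cast; ring
    · rw [herm_mul_outer_mul_herm symProj_conjTranspose, symProj_mulVec_vtens]
  have hσherm : σ.IsHermitian := by
    rw [hσ1]
    unfold Matrix.IsHermitian
    rw [conjTranspose_smul, conjTranspose_mul, conjTranspose_mul, symProj_conjTranspose,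
      extendId_conjTranspose hkn outer_conjTranspose]
    rw [show star (((μ : ℝ) : ℂ)) = ((μ : ℝ) : ℂ) from Complex.conj_ofReal μ, mul_assoc]
  have hσv : σ *ᵥ vn = ((μ : ℝ) : ℂ) • vn := by
    rw [hσ1, smul_mulVec]
    congr 1
    rw [← Matrix.mulVec_mulVec, ← Matrix.mulVec_mulVec, symProj_mulVec_vtens,
      extendId_outer_mulVec hkn u hvk, symProj_mulVec_vtens]
  -- matSqrt of the pure state
  have hH : (outer vn).IsHermitian := outer_isHermitian
  have hmsρ : matSqrt (outer vn) = outer vn := by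
    have h2 : outer vn * outer vn = (((1:ℝ) : ℂ)) • outer vn := by
      rw [outer_mul_outer hvn]; simp
    have he := eig_sq hH h2
    have : matSqrt (outer vn) = (((1:ℝ) : ℂ)) • outer vn := by
      rw [matSqrt]
      apply hermFun_eq_smul hH
      intro i
      have h3 := he i
      have h4 : hH.eigenvalues i = 0 ∨ hH.eigenvalues i = 1 := by
        rcases mul_eq_zero.mp (show hH.eigenvalues i * (hH.eigenvalues i - 1) = 0 by nlinarith)
          with h | h
        · exact Or.inl h
        · exact Or.inr (by linarith)
      rcases h4 with h | h <;> rw [h] <;> simp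
    rw [this]; simp
  -- matSqrt of σ acting on vn
  set S := matSqrt σ with hSdef
  have hSH : Sᴴ = S := by
    rw [hSdef, matSqrt]
    exact hermFun_isHermitian (g := Real.sqrt) hσherm
  have hSv : S *ᵥ vn = ((Real.sqrt μ : ℝ) : ℂ) • vn := by
    rw [hSdef, matSqrt]
    exact hermFun_mulVec hσherm hσv
  -- X†X
  have hXX : (outer vn * S)ᴴ * (outer vn * S) = ((μ : ℝ) : ℂ) • outer vn := by
    rw [conjTranspose_mul, hSH, outer_conjTranspose]
    calc S * outer vn * (outer vn * S) = S * (outer vn * outer vn) * S := by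
          noncomm_ring
      _ = S * outer vn * S := by rw [outer_mul_outer hvn]
      _ = outer (S *ᵥ vn) := herm_mul_outer_mul_herm hSH vn
      _ = ((μ : ℝ) : ℂ) • outer vn := by
          rw [hSv, outer_smul_real, Real.sq_sqrt hμpos.le]
  have hH2 : (((μ : ℝ) : ℂ) • outer vn).IsHermitian := by
    unfold Matrix.IsHermitian
    rw [conjTranspose_smul, outer_conjTranspose,
      show star (((μ : ℝ) : ℂ)) = ((μ : ℝ) : ℂ) from Complex.conj_ofReal μ]
  have hAA : (((μ : ℝ) : ℂ) • outer vn) * (((μ : ℝ) : ℂ) • outer vn)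
      = ((μ : ℝ) : ℂ) • (((μ : ℝ) : ℂ) • outer vn) := by
    rw [smul_mul_assoc, mul_smul_comm, outer_mul_outer hvn]
  have heig := eig_sq hH2 hAA
  have hinvμ : (Real.sqrt μ)⁻¹ * μ = Real.sqrt μ := by
    rw [inv_mul_eq_div, Real.div_sqrt]
  have hms2 : matSqrt (((μ : ℝ) : ℂ) • outer vn)
      = ((((Real.sqrt μ)⁻¹ : ℝ) : ℂ)) • (((μ : ℝ) : ℂ) • outer vn) := by
    rw [matSqrt]
    apply hermFun_eq_smul hH2
    intro i
    have h3 := heig i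
    have h4 : hH2.eigenvalues i = 0 ∨ hH2.eigenvalues i = μ := by
      rcases mul_eq_zero.mp (show hH2.eigenvalues i * (hH2.eigenvalues i - μ) = 0 by nlinarith)
        with h | h
      · exact Or.inl h
      · exact Or.inr (by linarith)
    rcases h4 with h | h
    · rw [h]; simp
    · rw [h]
      rw [show ((Real.sqrt μ : ℝ) : ℂ) = (((Real.sqrt μ)⁻¹ * μ : ℝ) : ℂ) from by rw [hinvμ]]
      push_cast
      ring
  -- assemble
  have hfid : fidelity (tpow (outer u) n) σ = μ := by
    rw [tpow_outer u, fidelity, traceNorm, hmsρ, ← hSdef, hXX, hms2]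
    rw [Matrix.trace_smul, Matrix.trace_smul, trace_outer hvn]
    have : ((((Real.sqrt μ)⁻¹ : ℝ) : ℂ) • (((μ : ℝ) : ℂ) • (1:ℂ))) = ((Real.sqrt μ : ℝ) : ℂ) := by
      rw [smul_eq_mul, smul_eq_mul, mul_one, ← Complex.ofReal_mul, hinvμ]
    rw [this, Complex.ofReal_re, Real.sq_sqrt hμpos.le]
  rw [hfid]
end

section
/- Let 1 ≤ k ≤ n ≤ d, and let π_n and π_k denote the maximally mixed states on the antisymmetric subspaces of (ℂ^d)^{⊗n} and (ℂ^d)^{⊗k} respectively. Then the partial trace over the last n−k tensor factors satisfies tr_{n→k}[π_n] = π_k. -/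
open scoped BigOperators Matrix Kronecker ComplexOrder
open Matrix

section PtraceAntiAux

open Finset

private lemma sumSignZero {m D : ℕ} {f g : Fin m → Fin D} (hf : ¬ Function.Injective f) :
    ∑ π : Equiv.Perm (Fin m), ((Equiv.Perm.sign π : ℤ) : ℂ) * (if g = f ∘ ⇑π then 1 else 0)
      = 0 := by
  simp only [Function.Injective, not_forall] at hf
  obtain ⟨i, j, hfij, hij⟩ := hf
  have hswap : ∀ y, f (Equiv.swap i j y) = f y := by
    intro y
    rcases eq_or_ne y i with rfl | hyi
    · rw [Equiv.swap_apply_left]; exact hfij.symm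
    rcases eq_or_ne y j with rfl | hyj
    · rw [Equiv.swap_apply_right]; exact hfij
    · rw [Equiv.swap_apply_of_ne_of_ne hyi hyj]
  refine Finset.sum_ninvolution (fun π => Equiv.swap i j * π) ?_ ?_
    (fun _ => Finset.mem_univ _) ?_
  · intro π
    have hcomp : f ∘ ⇑(Equiv.swap i j * π) = f ∘ ⇑π := funext fun x => hswap (π x)
    have hsign : ((Equiv.Perm.sign (Equiv.swap i j * π) : ℤ) : ℂ)
        = -((Equiv.Perm.sign π : ℤ) : ℂ) := by
      rw [Equiv.Perm.sign_mul, Equiv.Perm.sign_swap hij]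
      push_cast
      ring
    rw [hcomp, hsign]
    ring
  · intro π _ hEq
    have hEq' : Equiv.swap i j * π = π := hEq
    have h1 : Equiv.swap i j (π (π⁻¹ i)) = π (π⁻¹ i) := by
      rw [← Equiv.Perm.mul_apply, hEq']
    rw [Equiv.Perm.inv_def, Equiv.apply_symm_apply, Equiv.swap_apply_left] at h1
    exact hij h1.symm
  · intro π
    show Equiv.swap i j * (Equiv.swap i j * π) = π
    rw [← mul_assoc, Equiv.swap_mul_self, one_mul]

private def Afun (d k n : ℕ) (hkn : k ≤ n) (a : Fin k → Fin d)
    (z : Fin (n - k) → Fin d) : Fin n → Fin d :=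
  fun i => if h' : (i : ℕ) < k then a ⟨i, h'⟩
    else z ⟨(i : ℕ) - k, by have := i.isLt; omega⟩

private lemma Afun_lt {d k n : ℕ} (hkn : k ≤ n) (a : Fin k → Fin d) (z)
    (i : Fin n) (h : (i : ℕ) < k) : Afun d k n hkn a z i = a ⟨i, h⟩ := dif_pos h

private lemma Afun_ge {d k n : ℕ} (hkn : k ≤ n) (a : Fin k → Fin d) (z)
    (i : Fin n) (h : ¬ (i : ℕ) < k) :
    Afun d k n hkn a z i = z ⟨(i : ℕ) - k, by have := i.isLt; omega⟩ := dif_neg h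

private lemma Afun_cast {d k n : ℕ} (hkn : k ≤ n) (a : Fin k → Fin d) (z)
    (i : Fin k) : Afun d k n hkn a z (Fin.castLE hkn i) = a i := by
  rw [Afun_lt hkn a z _ (by simpa using i.isLt)]
  rfl

private lemma Afun_add {d k n : ℕ} (hkn : k ≤ n) (a : Fin k → Fin d) (z)
    (j : Fin (n - k)) :
    Afun d k n hkn a z ⟨k + (j : ℕ), by have := j.isLt; omega⟩ = z j := by
  rw [Afun_ge hkn a z _ (by simp)]
  congr 1
  exact Fin.ext (by simp)

private lemma Afun_inj {d k n : ℕ} (hkn : k ≤ n) {a : Fin k → Fin d} {z}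
    (ha : Function.Injective a) (hz : Function.Injective z)
    (hdisj : ∀ p q, z p ≠ a q) :
    Function.Injective (Afun d k n hkn a z) := by
  intro i j hij
  by_cases hi : (i : ℕ) < k <;> by_cases hj : (j : ℕ) < k
  · rw [Afun_lt hkn a z i hi, Afun_lt hkn a z j hj] at hij
    have := congrArg Fin.val (ha hij)
    exact Fin.ext this
  · rw [Afun_lt hkn a z i hi, Afun_ge hkn a z j hj] at hij
    exact absurd hij.symm (hdisj _ _)
  · rw [Afun_ge hkn a z i hi, Afun_lt hkn a z j hj] at hij
    exact absurd hij (hdisj _ _)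
  · rw [Afun_ge hkn a z i hi, Afun_ge hkn a z j hj] at hij
    have := congrArg Fin.val (hz hij)
    simp only at this
    exact Fin.ext (by omega)

private lemma a_inj_of_inj {d k n : ℕ} (hkn : k ≤ n) {a : Fin k → Fin d} {z}
    (h : Function.Injective (Afun d k n hkn a z)) : Function.Injective a := by
  intro i j hij
  have := h (a₁ := Fin.castLE hkn i) (a₂ := Fin.castLE hkn j)
    (by rw [Afun_cast, Afun_cast]; exact hij)
  simpa using this

private lemma good_of_inj {d k n : ℕ} (hkn : k ≤ n) {a : Fin k → Fin d} {z}
    (h : Function.Injective (Afun d k n hkn a z)) :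
    Function.Injective z ∧ ∀ p q, z p ≠ a q := by
  constructor
  · intro p q hpq
    have hp : (⟨k + (p : ℕ), by have := p.isLt; omega⟩ : Fin n)
        = ⟨k + (q : ℕ), by have := q.isLt; omega⟩ := by
      apply h
      rw [Afun_add, Afun_add]
      exact hpq
    have := congrArg Fin.val hp
    simp only at this
    exact Fin.ext (by omega)
  · intro p q hzq
    have heq : (⟨k + (p : ℕ), by have := p.isLt; omega⟩ : Fin n) = Fin.castLE hkn q := by
      apply h
      rw [Afun_add, Afun_cast]
      exact hzq
    have hv := congrArg Fin.val heq
    simp only [Fin.coe_castLE] at hv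
    have := q.isLt
    omega

private def permExt {k n : ℕ} (hkn : k ≤ n) (σ : Equiv.Perm (Fin k)) :
    Equiv.Perm (Fin n) :=
  (finSumFinEquiv.trans (finCongr (Nat.add_sub_cancel' hkn))).permCongr
    (Equiv.sumCongr σ 1)

private lemma sign_permExt {k n : ℕ} (hkn : k ≤ n) (σ : Equiv.Perm (Fin k)) :
    Equiv.Perm.sign (permExt hkn σ) = Equiv.Perm.sign σ := by
  unfold permExt
  rw [Equiv.Perm.sign_permCongr, Equiv.Perm.sign_sumCongr]
  simp

private lemma permExt_apply_lt {k n : ℕ} (hkn : k ≤ n) (σ : Equiv.Perm (Fin k))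
    (i : Fin n) (h : (i : ℕ) < k) :
    permExt hkn σ i = Fin.castLE hkn (σ ⟨i, h⟩) := by
  have hi : (finSumFinEquiv.trans (finCongr (Nat.add_sub_cancel' hkn)))
      (Sum.inl (⟨i, h⟩ : Fin k)) = i := Fin.ext (by simp)
  have h2 : (finSumFinEquiv.trans (finCongr (Nat.add_sub_cancel' hkn))).symm i
      = Sum.inl (⟨i, h⟩ : Fin k) := by
    rw [Equiv.symm_apply_eq]; exact hi.symm
  rw [permExt, Equiv.permCongr_apply, h2]
  apply Fin.ext
  simp

private lemma permExt_apply_ge {k n : ℕ} (hkn : k ≤ n) (σ : Equiv.Perm (Fin k))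
    (i : Fin n) (h : ¬ (i : ℕ) < k) :
    permExt hkn σ i = i := by
  have hi : (finSumFinEquiv.trans (finCongr (Nat.add_sub_cancel' hkn)))
      (Sum.inr (⟨(i : ℕ) - k, by have := i.isLt; omega⟩ : Fin (n - k))) = i :=
    Fin.ext (by simp; omega)
  have h2 : (finSumFinEquiv.trans (finCongr (Nat.add_sub_cancel' hkn))).symm i
      = Sum.inr (⟨(i : ℕ) - k, by have := i.isLt; omega⟩ : Fin (n - k)) := by
    rw [Equiv.symm_apply_eq]; exact hi.symm
  rw [permExt, Equiv.permCongr_apply, h2]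
  simpa using hi

private lemma Afun_comp_permExt {d k n : ℕ} (hkn : k ≤ n) (a b : Fin k → Fin d)
    (z) (σ : Equiv.Perm (Fin k)) (hb : b = a ∘ ⇑σ) :
    Afun d k n hkn b z = Afun d k n hkn a z ∘ ⇑(permExt hkn σ) := by
  funext i
  by_cases h : (i : ℕ) < k
  · rw [Function.comp_apply, Afun_lt hkn b z i h, permExt_apply_lt hkn σ i h,
      Afun_cast, hb]
    rfl
  · rw [Function.comp_apply, permExt_apply_ge hkn σ i h,
      Afun_ge hkn b z i h, Afun_ge hkn a z i h]

private lemma exists_perm_small {d k n : ℕ} (hkn : k ≤ n) {a b : Fin k → Fin d} {z}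
    (π : Equiv.Perm (Fin n))
    (hinj : Function.Injective (Afun d k n hkn a z))
    (hπ : Afun d k n hkn b z = Afun d k n hkn a z ∘ ⇑π) :
    ∃ σ : Equiv.Perm (Fin k), b = a ∘ ⇑σ := by
  have hB : Function.Injective (Afun d k n hkn b z) := by
    rw [hπ]; exact hinj.comp π.injective
  have hbz : ∀ (i : Fin k) (j : Fin (n - k)), b i ≠ z j := by
    intro i j hbij
    have heq : Fin.castLE hkn i = (⟨k + (j : ℕ), by have := j.isLt; omega⟩ : Fin n) := by
      apply hB
      rw [Afun_add, Afun_cast]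
      exact hbij
    have hv := congrArg Fin.val heq
    simp only [Fin.coe_castLE] at hv
    have := i.isLt
    omega
  have hrange : ∀ i : Fin k, ∃ j : Fin k, a j = b i := by
    intro i
    have h1 : b i = Afun d k n hkn a z (π (Fin.castLE hkn i)) := by
      rw [← Afun_cast hkn b z i, hπ, Function.comp_apply]
    by_cases hlt : ((π (Fin.castLE hkn i)) : ℕ) < k
    · rw [Afun_lt hkn a z _ hlt] at h1
      exact ⟨_, h1.symm⟩
    · rw [Afun_ge hkn a z _ hlt] at h1
      exact absurd h1 (hbz i _)
  have hbinj : Function.Injective b := a_inj_of_inj hkn hB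
  choose σf hσf using hrange
  have hσinj : Function.Injective σf := fun i i' h =>
    hbinj (by rw [← hσf i, ← hσf i', h])
  exact ⟨Equiv.ofBijective σf (Finite.injective_iff_bijective.mp hσinj),
    funext fun i => (hσf i).symm⟩

private def embOf {d k m : ℕ} (a : Fin k → Fin d) (z : Fin m → Fin d)
    (hz : Function.Injective z ∧ ∀ p q, z p ≠ a q) :
    Fin m ↪ {x : Fin d // ¬ ∃ q, a q = x} :=
  ⟨fun p => ⟨z p, fun hex => hz.2 p hex.choose hex.choose_spec.symm⟩,
    fun p p' h => hz.1 (congrArg Subtype.val h)⟩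

private lemma card_good {d k : ℕ} (m : ℕ) {a : Fin k → Fin d}
    (ha : Function.Injective a) :
    (Finset.univ.filter fun z : Fin m → Fin d =>
      Function.Injective z ∧ ∀ p q, z p ≠ a q).card
      = (d - k).descFactorial m := by
  classical
  have hcT : Fintype.card {x : Fin d // ¬ ∃ q, a q = x} = d - k := by
    rw [Fintype.card_subtype_compl]
    congr 1
    · simp
    · have h1 : Finset.univ.filter (fun x : Fin d => ∃ q, a q = x)
          = Finset.univ.image a := by
        ext x
        simp [eq_comm]
      rw [Fintype.card_subtype, h1, Finset.card_image_of_injective _ ha]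
      simp
  have hbij : (Finset.univ.filter fun z : Fin m → Fin d =>
      Function.Injective z ∧ ∀ p q, z p ≠ a q).card
      = (Finset.univ : Finset (Fin m ↪ {x : Fin d // ¬ ∃ q, a q = x})).card := by
    refine Finset.card_bij' (fun z hz => embOf a z (Finset.mem_filter.mp hz).2)
      (fun e _ => fun p => (e p : Fin d))
      ?hi ?hj ?left ?right
    case hi =>
      intro z hz
      exact Finset.mem_univ _
    case hj =>
      intro e he
      refine Finset.mem_filter.mpr ⟨Finset.mem_univ _, ?_, ?_⟩
      · intro p p' hpp'
        exact e.injective (Subtype.ext hpp')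
      · intro p q hq
        exact (e p).2 ⟨q, hq.symm⟩
    case left =>
      intro z hz
      rfl
    case right =>
      intro e he
      apply DFunLike.ext
      intro p
      apply Subtype.ext
      rfl
  rw [hbij, Finset.card_univ, Fintype.card_embedding_eq, hcT, Fintype.card_fin]

private lemma natident {d k n : ℕ} (hkn : k ≤ n) (hnd : n ≤ d) :
    (d - k).descFactorial (n - k) * (d.choose k * k.factorial)
      = d.choose n * n.factorial := by
  have h1 : n - k ≤ d - k := by omega
  have h2 : d - k - (n - k) = d - n := by omega
  have e1 : (d - n).factorial * (d - k).descFactorial (n - k)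
      = (d - k).factorial := by
    rw [← h2]
    exact Nat.factorial_mul_descFactorial h1
  apply Nat.eq_of_mul_eq_mul_right (Nat.factorial_pos (d - n))
  calc (d - k).descFactorial (n - k) * (d.choose k * k.factorial)
        * (d - n).factorial
      = d.choose k * k.factorial
        * ((d - n).factorial * (d - k).descFactorial (n - k)) := by ring
    _ = d.choose k * k.factorial * (d - k).factorial := by rw [e1]
    _ = d.factorial := Nat.choose_mul_factorial_mul_factorial (hkn.trans hnd)
    _ = d.choose n * n.factorial * (d - n).factorial :=
        (Nat.choose_mul_factorial_mul_factorial hnd).symm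

end PtraceAntiAux

private lemma piAnti_apply (D N : ℕ) (f g : Fin N → Fin D) :
    piAnti D N f g = ((D.choose N : ℂ))⁻¹ * (((N.factorial : ℂ))⁻¹ *
      ∑ π : Equiv.Perm (Fin N), ((Equiv.Perm.sign π : ℤ) : ℂ) *
        (if g = f ∘ ⇑π then 1 else 0)) := by
  simp [piAnti, antiProj, Matrix.smul_apply, Matrix.sum_apply, permMat,
    smul_eq_mul, Finset.mul_sum]


/-- The partial trace of the maximally mixed state on the antisymmetric subspace of `n`
qudits is the maximally mixed state on the antisymmetric subspace of `k` qudits. -/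
theorem ptrace_piAnti
    (d k n : ℕ) (hk : 1 ≤ k) (hkn : k ≤ n) (hnd : n ≤ d) :
    ptraceLast hkn (piAnti d n) = piAnti d k := by
  classical
  funext a b
  have hL : ptraceLast hkn (piAnti d n) a b
      = ((d.choose n : ℂ))⁻¹ * (((n.factorial : ℂ))⁻¹ *
        ∑ z : Fin (n - k) → Fin d, ∑ π : Equiv.Perm (Fin n),
          ((Equiv.Perm.sign π : ℤ) : ℂ) *
            (if Afun d k n hkn b z = Afun d k n hkn a z ∘ ⇑π then 1 else 0)) := by
    show (∑ z, piAnti d n (Afun d k n hkn a z) (Afun d k n hkn b z)) = _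
    simp only [piAnti_apply]
    rw [← Finset.mul_sum, ← Finset.mul_sum]
  rw [hL, piAnti_apply]
  by_cases ha : Function.Injective a
  · set G := Finset.univ.filter (fun z : Fin (n - k) → Fin d =>
      Function.Injective z ∧ ∀ p q, z p ≠ a q) with hGdef
    have hzero : ∀ z ∉ G, ∑ π : Equiv.Perm (Fin n),
        ((Equiv.Perm.sign π : ℤ) : ℂ) *
          (if Afun d k n hkn b z = Afun d k n hkn a z ∘ ⇑π then 1 else 0) = 0 := by
      intro z hzG
      apply sumSignZero
      intro hA
      exact hzG (Finset.mem_filter.mpr ⟨Finset.mem_univ _, good_of_inj hkn hA⟩)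
    have hsplit : (∑ z : Fin (n - k) → Fin d, ∑ π : Equiv.Perm (Fin n),
        ((Equiv.Perm.sign π : ℤ) : ℂ) *
          (if Afun d k n hkn b z = Afun d k n hkn a z ∘ ⇑π then 1 else 0))
        = ∑ z ∈ G, ∑ π : Equiv.Perm (Fin n),
        ((Equiv.Perm.sign π : ℤ) : ℂ) *
          (if Afun d k n hkn b z = Afun d k n hkn a z ∘ ⇑π then 1 else 0) :=
      (Finset.sum_subset (Finset.subset_univ G) (fun z _ hz => hzero z hz)).symm
    by_cases hb : ∃ σ : Equiv.Perm (Fin k), b = a ∘ ⇑σ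
    · obtain ⟨σ₀, hσ₀⟩ := hb
      have hG : ∀ z ∈ G, (∑ π : Equiv.Perm (Fin n),
          ((Equiv.Perm.sign π : ℤ) : ℂ) *
            (if Afun d k n hkn b z = Afun d k n hkn a z ∘ ⇑π then 1 else 0))
          = ((Equiv.Perm.sign σ₀ : ℤ) : ℂ) := by
        intro z hzG
        obtain ⟨-, hzinj, hdisj⟩ := Finset.mem_filter.mp hzG
        have hAinj := Afun_inj hkn ha hzinj hdisj
        rw [Finset.sum_eq_single (permExt hkn σ₀)]
        · rw [if_pos (Afun_comp_permExt hkn a b z σ₀ hσ₀), mul_one, sign_permExt]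
        · intro π _ hne
          have hneg : ¬ (Afun d k n hkn b z = Afun d k n hkn a z ∘ ⇑π) := by
            intro hcon
            apply hne
            apply Equiv.ext
            intro x
            exact hAinj (congrFun
              (hcon.symm.trans (Afun_comp_permExt hkn a b z σ₀ hσ₀)) x)
          rw [if_neg hneg, mul_zero]
        · intro h
          exact absurd (Finset.mem_univ _) h
      have hcount : (∑ z ∈ G, ∑ π : Equiv.Perm (Fin n),
          ((Equiv.Perm.sign π : ℤ) : ℂ) *
            (if Afun d k n hkn b z = Afun d k n hkn a z ∘ ⇑π then 1 else 0))
          = (((d - k).descFactorial (n - k) : ℕ) : ℂ)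
            * ((Equiv.Perm.sign σ₀ : ℤ) : ℂ) := by
        rw [Finset.sum_congr rfl hG, Finset.sum_const, nsmul_eq_mul, hGdef,
          card_good (n - k) ha]
      have hRs : (∑ σ : Equiv.Perm (Fin k), ((Equiv.Perm.sign σ : ℤ) : ℂ) *
          (if b = a ∘ ⇑σ then 1 else 0)) = ((Equiv.Perm.sign σ₀ : ℤ) : ℂ) := by
        rw [Finset.sum_eq_single σ₀]
        · rw [if_pos hσ₀, mul_one]
        · intro σ _ hne
          have hneg : ¬ (b = a ∘ ⇑σ) := by
            intro hcon
            apply hne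
            apply Equiv.ext
            intro x
            exact ha (congrFun (hcon.symm.trans hσ₀) x)
          rw [if_neg hneg, mul_zero]
        · intro h
          exact absurd (Finset.mem_univ _) h
      rw [hsplit, hcount, hRs]
      have h1 : (d.choose n : ℂ) ≠ 0 :=
        Nat.cast_ne_zero.mpr (Nat.choose_pos hnd).ne'
      have h2 : (d.choose k : ℂ) ≠ 0 :=
        Nat.cast_ne_zero.mpr (Nat.choose_pos (hkn.trans hnd)).ne'
      have h3 : ((n.factorial : ℂ)) ≠ 0 :=
        Nat.cast_ne_zero.mpr n.factorial_ne_zero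
      have h4 : ((k.factorial : ℂ)) ≠ 0 :=
        Nat.cast_ne_zero.mpr k.factorial_ne_zero
      have hnum : ((d.choose n : ℂ))⁻¹ * ((n.factorial : ℂ))⁻¹
          * (((d - k).descFactorial (n - k) : ℕ) : ℂ)
          = ((d.choose k : ℂ))⁻¹ * ((k.factorial : ℂ))⁻¹ := by
        field_simp
        exact_mod_cast (mul_assoc _ _ _).trans (natident hkn hnd)
      calc ((d.choose n : ℂ))⁻¹ * (((n.factorial : ℂ))⁻¹ *
            ((((d - k).descFactorial (n - k) : ℕ) : ℂ)
              * ((Equiv.Perm.sign σ₀ : ℤ) : ℂ)))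
          = (((d.choose n : ℂ))⁻¹ * ((n.factorial : ℂ))⁻¹
              * (((d - k).descFactorial (n - k) : ℕ) : ℂ))
            * ((Equiv.Perm.sign σ₀ : ℤ) : ℂ) := by ring
        _ = (((d.choose k : ℂ))⁻¹ * ((k.factorial : ℂ))⁻¹)
            * ((Equiv.Perm.sign σ₀ : ℤ) : ℂ) := by rw [hnum]
        _ = _ := by ring
    · have hG0 : ∀ z ∈ G, (∑ π : Equiv.Perm (Fin n),
          ((Equiv.Perm.sign π : ℤ) : ℂ) *
            (if Afun d k n hkn b z = Afun d k n hkn a z ∘ ⇑π then 1 else 0)) = 0 := by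
        intro z hzG
        obtain ⟨-, hzinj, hdisj⟩ := Finset.mem_filter.mp hzG
        have hAinj := Afun_inj hkn ha hzinj hdisj
        apply Finset.sum_eq_zero
        intro π _
        have hneg : ¬ (Afun d k n hkn b z = Afun d k n hkn a z ∘ ⇑π) := by
          intro hcon
          exact hb (exists_perm_small hkn π hAinj hcon)
        rw [if_neg hneg, mul_zero]
      have hR0 : (∑ σ : Equiv.Perm (Fin k), ((Equiv.Perm.sign σ : ℤ) : ℂ) *
          (if b = a ∘ ⇑σ then 1 else 0)) = 0 := by
        apply Finset.sum_eq_zero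
        intro σ _
        have hneg : ¬ (b = a ∘ ⇑σ) := fun hcon => hb ⟨σ, hcon⟩
        rw [if_neg hneg, mul_zero]
      rw [hsplit, Finset.sum_eq_zero hG0, hR0, mul_zero, mul_zero, mul_zero,
        mul_zero]
  · have hL0 : (∑ z : Fin (n - k) → Fin d, ∑ π : Equiv.Perm (Fin n),
        ((Equiv.Perm.sign π : ℤ) : ℂ) *
          (if Afun d k n hkn b z = Afun d k n hkn a z ∘ ⇑π then 1 else 0)) = 0 :=
      Finset.sum_eq_zero fun z _ =>
        sumSignZero fun hA => ha (a_inj_of_inj hkn hA)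
    rw [hL0, sumSignZero ha, mul_zero, mul_zero, mul_zero, mul_zero]
end
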